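/- If f: ℝ → ℝ is continuous with f(t)/t^{r-1} increasing on (0,∞) for some r > 2, then f(t)·t ≥ r·F(t) for all t ≥ 0, where F(t) = ∫₀ᵗ f(s) ds. -/

import Mathlib

open Real Set intervalIntegral

/-- If `f` is continuous and `t ↦ f t / t^(r-1)` is increasing on `(0,∞)`
with `r > 2`, then `f(t)·t ≥ r·F(t)` for all `t ≥ 0`, where `F t = ∫₀ᵗ f`. -/
theorem ambrosetti_rabinowitz_type (f : ℝ → ℝ) (r : ℝ)
    (hf_cont : Continuous f) (hr : 2 < r)
    (hmono : MonotoneOn (fun t : ℝ => f t / t ^ (r - 1)) (Ioi (0:ℝ))) :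
    ∀ t : ℝ, 0 ≤ t → f t * t ≥ r * ∫ s in (0:ℝ)..t, f s := by
  intro t ht
  rcases eq_or_lt_of_le ht with h0 | htpos
  · simp [← h0]
  have hrpos : (0:ℝ) < r := by linarith
  have hr1 : (0:ℝ) < r - 1 := by linarith
  have htpow : (0:ℝ) < t ^ (r - 1) := Real.rpow_pos_of_pos htpos _
  set C : ℝ := f t / t ^ (r - 1) with hC
  -- bound the integral
  have hint1 : IntervalIntegrable f MeasureTheory.volume 0 t := hf_cont.intervalIntegrable 0 t
  have hint2 : IntervalIntegrable (fun s : ℝ => C * s ^ (r - 1)) MeasureTheory.volume 0 t :=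
    (intervalIntegrable_rpow' (by linarith)).const_mul C
  have hne : ∀ᵐ s : ℝ ∂MeasureTheory.volume, s ≠ (0:ℝ) := by
    rw [MeasureTheory.ae_iff]
    simp
  have hle : (∫ s in (0:ℝ)..t, f s) ≤ ∫ s in (0:ℝ)..t, C * s ^ (r - 1) := by
    apply intervalIntegral.integral_mono_ae_restrict ht hint1 hint2
    filter_upwards [MeasureTheory.ae_restrict_mem measurableSet_Icc,
      (MeasureTheory.ae_mono MeasureTheory.Measure.restrict_le_self) hne] with s hs hs0
    have hspos : 0 < s := lt_of_le_of_ne hs.1 (Ne.symm hs0)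
    have hspow : (0:ℝ) < s ^ (r - 1) := Real.rpow_pos_of_pos hspos _
    have := hmono (mem_Ioi.2 hspos) (mem_Ioi.2 htpos) hs.2
    calc f s = (f s / s ^ (r - 1)) * s ^ (r - 1) := by field_simp
    _ ≤ C * s ^ (r - 1) := by
        apply mul_le_mul_of_nonneg_right this hspow.le
  have hval : (∫ s in (0:ℝ)..t, C * s ^ (r - 1)) = C * (t ^ r / r) := by
    rw [intervalIntegral.integral_const_mul, integral_rpow (Or.inl (by linarith))]
    rw [sub_add_cancel, Real.zero_rpow (by linarith)]
    ring
  have htr : t ^ r = t ^ (r - 1) * t := by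
    rw [← Real.rpow_add_one (ne_of_gt htpos)]
    ring_nf
  have : r * ∫ s in (0:ℝ)..t, f s ≤ C * t ^ r := by
    have := mul_le_mul_of_nonneg_left hle hrpos.le
    calc r * ∫ s in (0:ℝ)..t, f s ≤ r * (C * (t ^ r / r)) := by rw [← hval]; exact this
    _ = C * t ^ r := by field_simp
  calc r * ∫ s in (0:ℝ)..t, f s ≤ C * t ^ r := this
  _ = f t * t := by rw [htr, hC]; field_simp
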